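/- arXiv:2402.13357 — 9 statements merged into one kernel-verified Lean document; each statement's English description precedes it below -/
import Mathlib

section
/- Let p : Fin n → ℕ with p j > 0, d : Fin n → ℕ nondecreasing, and define S_0 = {0}, S'_{j+1} = S_j + {0, p j}, S_{j+1} = S'_{j+1} ∩ [0, d j]. Then for each j ≥ 1, the number of elements of S'_{j+1} that exceed d j is at most p j, i.e. |S'_{j+1} ∩ (d j, ∞)| ≤ p j. -/
open Pointwise in
theorem stmt_3 (n : ℕ) (p d : ℕ → ℕ)
    (hp : ∀ j < n, 0 < p j)
    (hd : ∀ i j, i ≤ j → j < n → d i ≤ d j)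
    (S S' : ℕ → Finset ℕ)
    (hS0 : S 0 = {0})
    (hS' : ∀ j < n, S' (j + 1) = S j + ({0, p j} : Finset ℕ))
    (hScap : ∀ j < n, S (j + 1) = (S' (j + 1)).filter (· ≤ d j)) :
    ∀ j, 1 ≤ j → j < n → ((S' (j + 1)).filter (fun x => d j < x)).card ≤ p j := by
  intro j hj1 hjn
  obtain ⟨k, rfl⟩ : ∃ k, j = k + 1 := ⟨j - 1, by omega⟩
  have hkn : k < n := by omega
  have hsub : ((S' (k + 1 + 1)).filter (fun x => d (k + 1) < x)) ⊆
      Finset.Ioc (d (k + 1)) (d (k + 1) + p (k + 1)) := by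
    intro x hx
    rw [Finset.mem_filter] at hx
    obtain ⟨hxS, hdx⟩ := hx
    rw [hS' (k + 1) hjn] at hxS
    rw [Finset.mem_add] at hxS
    obtain ⟨a, ha, b, hb, rfl⟩ := hxS
    rw [hScap k hkn, Finset.mem_filter] at ha
    have hak : a ≤ d k := ha.2
    have hdk : d k ≤ d (k + 1) := hd k (k + 1) (by omega) hjn
    have hbp : b ≤ p (k + 1) := by
      simp only [Finset.mem_insert, Finset.mem_singleton] at hb
      rcases hb with rfl | rfl <;> omega
    rw [Finset.mem_Ioc]
    exact ⟨hdx, by omega⟩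
  calc ((S' (k + 1 + 1)).filter (fun x => d (k + 1) < x)).card
      ≤ (Finset.Ioc (d (k + 1)) (d (k + 1) + p (k + 1))).card :=
        Finset.card_le_card hsub
    _ = p (k + 1) := by rw [Nat.card_Ioc]; omega
end

section
/- Let p : Fin n → ℕ with p j > 0, d nondecreasing, and define S_0 = {0}, S'_{j+1} = S_j + {0, p j}, S_{j+1} = S'_{j+1} ∩ [0, d j]. If x ≤ d j and x ∈ S'_{j+1} \ S_j, then x ∈ S_k for all k with j+1 ≤ k ≤ n. In particular, for each fixed natural number x, there is at most one index j ∈ [n] with x ∈ (S'_{j+1} \ S_j) ∩ [0, d j]. -/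
open Pointwise in
theorem stmt_4 (n : ℕ) (p d : ℕ → ℕ)
    (hp : ∀ j < n, 0 < p j)
    (hd : ∀ i j, i ≤ j → j < n → d i ≤ d j)
    (S S' : ℕ → Finset ℕ)
    (hS0 : S 0 = {0})
    (hS' : ∀ j < n, S' (j + 1) = S j + ({0, p j} : Finset ℕ))
    (hScap : ∀ j < n, S (j + 1) = (S' (j + 1)).filter (· ≤ d j)) :
    (∀ j < n, ∀ x : ℕ, x ≤ d j → x ∈ S' (j + 1) → x ∉ S j →
      ∀ k, j + 1 ≤ k → k ≤ n → x ∈ S k) ∧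
    (∀ x : ℕ,
      ((Finset.range n).filter
        (fun j => x ∈ S' (j + 1) ∧ x ∉ S j ∧ x ≤ d j)).card ≤ 1) := by
  have main : ∀ j < n, ∀ x : ℕ, x ≤ d j → x ∈ S' (j + 1) → x ∉ S j →
      ∀ k, j + 1 ≤ k → k ≤ n → x ∈ S k := by
    intro j hj x hx hx' hxn k hk1 hk2
    induction k with
    | zero => omega
    | succ m ih =>
      by_cases hm : j = m
      · subst hm
        rw [hScap j hj]
        exact Finset.mem_filter.2 ⟨hx', hx⟩
      · have hm' : j + 1 ≤ m := by omega
        have hmn : m < n := by omega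
        have hxm : x ∈ S m := ih hm' (by omega)
        rw [hScap m hmn]
        refine Finset.mem_filter.2 ⟨?_, ?_⟩
        · rw [hS' m hmn]
          have h0 : (0 : ℕ) ∈ ({0, p m} : Finset ℕ) := by simp
          simpa using Finset.add_mem_add hxm h0
        · exact le_trans hx (hd j m (by omega) hmn)
  refine ⟨main, fun x => ?_⟩
  rw [Finset.card_le_one]
  intro a ha b hb
  simp only [Finset.mem_filter, Finset.mem_range] at ha hb
  by_contra hne
  rcases Nat.lt_or_ge a b with h | h
  · exact hb.2.2.1 (main a ha.1 x ha.2.2.2 ha.2.1 ha.2.2.1 b (by omega) (by omega))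
  · have h' : b < a := by omega
    exact ha.2.2.1 (main b hb.1 x hb.2.2.2 hb.2.1 hb.2.2.1 a (by omega) (by omega))
end

section
/- Let p : Fin n → ℕ with p j > 0, d nondecreasing, P = Σ_j p j, and define S_0 = {0}, S'_{j+1} = S_j + {0, p j}, S_{j+1} = S'_{j+1} ∩ [0, d j]. Then the total number of insertions satisfies Σ_{j=0}^{n−1} |S'_{j+1} \ S_j| ≤ 2P + 1. -/
open Pointwise in
theorem stmt_5 (n : ℕ) (p d : ℕ → ℕ)
    (hp : ∀ j < n, 0 < p j)
    (hd : ∀ i j, i ≤ j → j < n → d i ≤ d j)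
    (S S' : ℕ → Finset ℕ)
    (hS0 : S 0 = {0})
    (hS' : ∀ j < n, S' (j + 1) = S j + ({0, p j} : Finset ℕ))
    (hScap : ∀ j < n, S (j + 1) = (S' (j + 1)).filter (· ≤ d j)) :
    ∑ j ∈ Finset.range n, ((S' (j + 1)) \ (S j)).card ≤
      2 * (∑ j ∈ Finset.range n, p j) + 1 := by
  classical
  -- S j ⊆ S' (j+1)
  have hsub : ∀ j < n, S j ⊆ S' (j + 1) := by
    intro j hj x hx
    rw [hS' j hj]
    have : x + 0 ∈ S j + ({0, p j} : Finset ℕ) :=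
      Finset.add_mem_add hx (by simp)
    simpa using this
  -- elements of S j are ≤ d j for j < n
  have hSle : ∀ j < n, ∀ x ∈ S j, x ≤ d j := by
    intro j hj x hx
    cases j with
    | zero =>
      rw [hS0] at hx; simp at hx; omega
    | succ k =>
      rw [hScap k (by omega)] at hx
      have := (Finset.mem_filter.mp hx).2
      exact le_trans this (hd k (k + 1) (by omega) hj)
  -- the removed set at step j has at most p j elements
  have hR : ∀ j < n,
      ((S' (j + 1)).filter (fun x => ¬ x ≤ d j)).card ≤ p j := by
    intro j hj
    have hsubset : (S' (j + 1)).filter (fun x => ¬ x ≤ d j)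
        ⊆ Finset.Ioc (d j) (d j + p j) := by
      intro x hx
      rw [Finset.mem_filter] at hx
      obtain ⟨hx1, hx2⟩ := hx
      rw [hS' j hj, Finset.mem_add] at hx1
      obtain ⟨s, hs, e, he, rfl⟩ := hx1
      have hsd : s ≤ d j := hSle j hj s hs
      simp only [Finset.mem_insert, Finset.mem_singleton] at he
      rw [Finset.mem_Ioc]
      rcases he with rfl | rfl <;> omega
    calc ((S' (j + 1)).filter (fun x => ¬ x ≤ d j)).card
        ≤ (Finset.Ioc (d j) (d j + p j)).card := Finset.card_le_card hsubset
      _ = p j := by simp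
  -- elements of S j are bounded by the partial sums of p
  have hSbound : ∀ j, j ≤ n → ∀ x ∈ S j, x ≤ ∑ i ∈ Finset.range j, p i := by
    intro j
    induction j with
    | zero =>
      intro _ x hx; rw [hS0] at hx; simp at hx; simp [hx]
    | succ k ih =>
      intro hk x hx
      rw [hScap k (by omega)] at hx
      have hx1 := (Finset.mem_filter.mp hx).1
      rw [hS' k (by omega), Finset.mem_add] at hx1
      obtain ⟨s, hs, e, he, rfl⟩ := hx1
      have := ih (by omega) s hs
      simp only [Finset.mem_insert, Finset.mem_singleton] at he
      rw [Finset.sum_range_succ]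
      rcases he with rfl | rfl <;> omega
  -- per-step cardinality identity
  have hstep : ∀ j < n, ((S' (j + 1)) \ S j).card + (S j).card
      = (S (j + 1)).card + ((S' (j + 1)).filter (fun x => ¬ x ≤ d j)).card := by
    intro j hj
    have h1 : ((S' (j + 1)) \ S j).card + (S j).card = (S' (j + 1)).card :=
      Finset.card_sdiff_add_card_eq_card (hsub j hj)
    have h2 : ((S' (j + 1)).filter (fun x => x ≤ d j)).card +
        ((S' (j + 1)).filter (fun x => ¬ x ≤ d j)).card = (S' (j + 1)).card :=
      Finset.card_filter_add_card_filter_not (p := fun x => x ≤ d j)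
    rw [hScap j hj]
    omega
  -- sum the per-step identity
  have hsum : (∑ j ∈ Finset.range n, ((S' (j + 1)) \ S j).card)
        + (∑ j ∈ Finset.range n, (S j).card)
      = (∑ j ∈ Finset.range n, (S (j + 1)).card)
        + ∑ j ∈ Finset.range n, ((S' (j + 1)).filter (fun x => ¬ x ≤ d j)).card := by
    rw [← Finset.sum_add_distrib, ← Finset.sum_add_distrib]
    exact Finset.sum_congr rfl fun j hj => hstep j (Finset.mem_range.mp hj)
  -- telescoping
  have htel : (∑ j ∈ Finset.range n, (S (j + 1)).card) + (S 0).card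
      = (∑ j ∈ Finset.range n, (S j).card) + (S n).card := by
    have h1 := Finset.sum_range_succ' (fun j => (S j).card) n
    have h2 := Finset.sum_range_succ (fun j => (S j).card) n
    omega
  have hS0card : (S 0).card = 1 := by rw [hS0]; simp
  have hSncard : (S n).card ≤ (∑ j ∈ Finset.range n, p j) + 1 := by
    have : S n ⊆ Finset.range ((∑ j ∈ Finset.range n, p j) + 1) := by
      intro x hx
      rw [Finset.mem_range]
      have := hSbound n le_rfl x hx
      omega
    calc (S n).card ≤ (Finset.range ((∑ j ∈ Finset.range n, p j) + 1)).card :=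
          Finset.card_le_card this
      _ = (∑ j ∈ Finset.range n, p j) + 1 := by simp
  have hRsum : (∑ j ∈ Finset.range n, ((S' (j + 1)).filter (fun x => ¬ x ≤ d j)).card)
      ≤ ∑ j ∈ Finset.range n, p j :=
    Finset.sum_le_sum fun j hj => hR j (Finset.mem_range.mp hj)
  omega
end

section
/- Let p : Fin n → ℕ with p j > 0 and d : Fin n → ℕ nondecreasing, and define S_0 = {0}, S'_{j+1} = S_j + {0, p j}, S_{j+1} = S'_{j+1} ∩ [0, d j]. Then for every 0 ≤ j ≤ n and every t ∈ ℕ: t ∈ S_j if and only if there exists a subset J ⊆ {0,…,j−1} with Σ_{i∈J} p i = t such that for every k ∈ J, Σ_{i∈J, i ≤ k} p i ≤ d k. -/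
open Pointwise in
theorem stmt_7 (n : ℕ) (p d : ℕ → ℕ)
    (hp : ∀ j < n, 0 < p j)
    (hd : ∀ i j, i ≤ j → j < n → d i ≤ d j)
    (S S' : ℕ → Finset ℕ)
    (hS0 : S 0 = {0})
    (hS' : ∀ j < n, S' (j + 1) = S j + ({0, p j} : Finset ℕ))
    (hScap : ∀ j < n, S (j + 1) = (S' (j + 1)).filter (· ≤ d j)) :
    ∀ j ≤ n, ∀ t : ℕ,
      t ∈ S j ↔ ∃ J ⊆ Finset.range j,
        (∑ i ∈ J, p i = t) ∧
        ∀ k ∈ J, ∑ i ∈ J.filter (· ≤ k), p i ≤ d k := by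
  intro j
  induction j with
  | zero =>
    intro _ t
    rw [hS0]
    simp only [Finset.mem_singleton, Finset.range_zero, Finset.subset_empty]
    constructor
    · rintro rfl
      exact ⟨∅, rfl, by simp, by simp⟩
    · rintro ⟨J, rfl, hsum, _⟩
      simpa using hsum.symm
  | succ j ih =>
    intro hj t
    have hjn : j < n := hj
    rw [hScap j hjn, Finset.mem_filter, hS' j hjn, Finset.mem_add]
    constructor
    · rintro ⟨⟨s, hs, a, ha, rfl⟩, hle⟩
      obtain ⟨J, hJ, hsum, hpre⟩ := (ih (le_of_lt hj) s).mp hs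
      have hJ' : J ⊆ Finset.range (j + 1) :=
        hJ.trans (Finset.range_subset_range.mpr (Nat.le_succ j))
      simp only [Finset.mem_insert, Finset.mem_singleton] at ha
      rcases ha with rfl | rfl
      · exact ⟨J, hJ', by simpa using hsum, hpre⟩
      · have hjJ : j ∉ J := fun h => absurd (Finset.mem_range.mp (hJ h)) (by omega)
        refine ⟨insert j J, ?_, ?_, ?_⟩
        · intro x hx
          rcases Finset.mem_insert.mp hx with rfl | hx
          · simp
          · exact hJ' hx
        · rw [Finset.sum_insert hjJ]; omega
        · intro k hk
          rcases Finset.mem_insert.mp hk with rfl | hk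
          · have heq : (insert k J).filter (· ≤ k) = insert k J := by
              apply Finset.filter_true_of_mem
              intro x hx
              rcases Finset.mem_insert.mp hx with rfl | hx
              · exact le_refl _
              · exact le_of_lt (Finset.mem_range.mp (hJ hx))
            rw [heq, Finset.sum_insert hjJ]
            omega
          · have hkj : k < j := Finset.mem_range.mp (hJ hk)
            have heq : (insert j J).filter (· ≤ k) = J.filter (· ≤ k) := by
              rw [Finset.filter_insert, if_neg (by omega)]
            rw [heq]; exact hpre k hk
    · rintro ⟨J, hJ, rfl, hpre⟩
      by_cases hjJ : j ∈ J
      · have hJ' : J.erase j ⊆ Finset.range j := by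
          intro x hx
          obtain ⟨hne, hxJ⟩ := Finset.mem_erase.mp hx
          have := Finset.mem_range.mp (hJ hxJ)
          exact Finset.mem_range.mpr (by omega)
        have hsum' : ∑ i ∈ J.erase j, p i + p j = ∑ i ∈ J, p i :=
          Finset.sum_erase_add _ _ hjJ
        have hmem : ∑ i ∈ J.erase j, p i ∈ S j := by
          refine (ih (le_of_lt hj) _).mpr ⟨J.erase j, hJ', rfl, ?_⟩
          intro k hk
          obtain ⟨hne, hkJ⟩ := Finset.mem_erase.mp hk
          have hkj : k < j := by
            have := Finset.mem_range.mp (hJ hkJ); omega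
          have heq : (J.erase j).filter (· ≤ k) = J.filter (· ≤ k) := by
            ext x
            simp only [Finset.mem_filter, Finset.mem_erase]
            constructor
            · rintro ⟨⟨_, hx⟩, hxk⟩; exact ⟨hx, hxk⟩
            · rintro ⟨hx, hxk⟩; exact ⟨⟨by omega, hx⟩, hxk⟩
          rw [heq]; exact hpre k hkJ
        have hle : ∑ i ∈ J, p i ≤ d j := by
          have heq : J.filter (· ≤ j) = J := by
            apply Finset.filter_true_of_mem
            intro x hx
            have := Finset.mem_range.mp (hJ hx); omega
          have := hpre j hjJ
          rwa [heq] at this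
        refine ⟨⟨∑ i ∈ J.erase j, p i, hmem, p j, by simp, hsum'⟩, hle⟩
      · have hJ' : J ⊆ Finset.range j := by
          intro x hx
          have := Finset.mem_range.mp (hJ hx)
          have : x ≠ j := fun h => hjJ (h ▸ hx)
          exact Finset.mem_range.mpr (by omega)
        have hmem : ∑ i ∈ J, p i ∈ S j :=
          (ih (le_of_lt hj) _).mpr ⟨J, hJ', rfl, hpre⟩
        have hle : ∑ i ∈ J, p i ≤ d j := by
          rcases J.eq_empty_or_nonempty with rfl | hne
          · simp
          · set k := J.max' hne with hk
            have hkJ : k ∈ J := J.max'_mem hne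
            have hkj : k < j := Finset.mem_range.mp (hJ' hkJ)
            have heq : J.filter (· ≤ k) = J := by
              apply Finset.filter_true_of_mem
              intro x hx
              exact J.le_max' x hx
            calc ∑ i ∈ J, p i = ∑ i ∈ J.filter (· ≤ k), p i := by rw [heq]
              _ ≤ d k := hpre k hkJ
              _ ≤ d j := hd k j (le_of_lt hkj) hjn
        exact ⟨⟨∑ i ∈ J, p i, hmem, 0, by simp, add_zero _⟩, hle⟩
end

section
/- Let p : Fin n → ℕ with p j > 0 and suppose all due dates are equal to a common value d. Then a natural number t belongs to the Lawler–Moore set S_n (defined by S_0 = {0}, S'_{j+1} = S_j + {0, p j}, S_{j+1} = S'_{j+1} ∩ [0, d]) if and only if t ≤ d and t is a subset sum of p, i.e. t = Σ_{i∈J} p i for some J ⊆ {0,…,n−1}. -/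
open Pointwise in
theorem stmt_8 (n : ℕ) (p : ℕ → ℕ) (d : ℕ)
    (hp : ∀ j < n, 0 < p j)
    (S S' : ℕ → Finset ℕ)
    (hS0 : S 0 = {0})
    (hS' : ∀ j < n, S' (j + 1) = S j + ({0, p j} : Finset ℕ))
    (hScap : ∀ j < n, S (j + 1) = (S' (j + 1)).filter (· ≤ d)) :
    ∀ t : ℕ, t ∈ S n ↔ t ≤ d ∧ ∃ J ⊆ Finset.range n, ∑ i ∈ J, p i = t := by
  suffices h : ∀ j ≤ n, ∀ t : ℕ, t ∈ S j ↔ t ≤ d ∧ ∃ J ⊆ Finset.range j, ∑ i ∈ J, p i = t from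
    h n le_rfl
  intro j hj
  induction j with
  | zero =>
    intro t
    simp only [hS0, Finset.mem_singleton]
    constructor
    · rintro rfl
      exact ⟨Nat.zero_le _, ∅, by simp⟩
    · rintro ⟨_, J, hJ, hsum⟩
      simp only [Finset.range_zero, Finset.subset_empty] at hJ
      simp [hJ] at hsum
      omega
  | succ j ih =>
    have hjn : j < n := hj
    have ih := ih (le_of_lt hjn)
    intro t
    rw [hScap j hjn, Finset.mem_filter, hS' j hjn, Finset.mem_add]
    constructor
    · rintro ⟨⟨b, hb, c, hc, rfl⟩, hle⟩
      obtain ⟨hbd, J, hJ, hsum⟩ := (ih b).mp hb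
      simp only [Finset.mem_insert, Finset.mem_singleton] at hc
      rcases hc with rfl | rfl
      · exact ⟨hle, J, hJ.trans (Finset.range_subset_range.mpr (Nat.le_succ j)), by simp [hsum]⟩
      · refine ⟨hle, insert j J, ?_, ?_⟩
        · intro x hx
          rcases Finset.mem_insert.mp hx with rfl | hx
          · exact Finset.self_mem_range_succ x
          · exact Finset.range_subset_range.mpr (Nat.le_succ j) (hJ hx)
        · rw [Finset.sum_insert (fun hjJ => absurd (hJ hjJ) (by simp))]
          omega
    · rintro ⟨hle, J, hJ, rfl⟩
      refine ⟨?_, hle⟩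
      by_cases hjJ : j ∈ J
      · have hsplit : ∑ i ∈ J, p i = ∑ i ∈ J.erase j, p i + p j := by
          rw [add_comm, Finset.add_sum_erase _ _ hjJ]
        refine ⟨∑ i ∈ J.erase j, p i, ?_, p j, by simp, by omega⟩
        refine (ih _).mpr ⟨by omega, J.erase j, ?_, rfl⟩
        intro x hx
        obtain ⟨hxj, hxJ⟩ := Finset.mem_erase.mp hx
        have := Finset.mem_range.mp (hJ hxJ)
        exact Finset.mem_range.mpr (by omega)
      · refine ⟨∑ i ∈ J, p i, ?_, 0, by simp, by omega⟩
        refine (ih _).mpr ⟨hle, J, ?_, rfl⟩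
        intro x hx
        have := Finset.mem_range.mp (hJ hx)
        have : x ≠ j := fun h => hjJ (h ▸ hx)
        exact Finset.mem_range.mpr (by omega)
end

section
/- Let m ≥ 1 be fixed, p : Fin n → ℕ with p j > 0, d : Fin n → ℕ nondecreasing, P = Σ_j p j, and define sets S_j ⊆ ℕ^m by S_0 = {0}, S'_{j+1} = S_j + {0, p j · e_0, …, p j · e_{m−1}}, S_{j+1} = S'_{j+1} ∩ [0, d j]^m. Then Σ_{j∈[n]} |S'_{j+1} \ S_j| ≤ (m+1) · (P+1)^m. -/
open Pointwise in
theorem stmt_13 (m n : ℕ) (hm : 1 ≤ m) (p d : ℕ → ℕ)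
    (hp : ∀ j < n, 0 < p j)
    (hd : ∀ i j, i ≤ j → j < n → d i ≤ d j)
    (S S' : ℕ → Finset (Fin m → ℕ))
    (hS0 : S 0 = {0})
    (hS' : ∀ j < n, S' (j + 1) =
      S j + insert 0 ((Finset.univ : Finset (Fin m)).image (fun i => Pi.single i (p j))))
    (hScap : ∀ j < n, S (j + 1) = (S' (j + 1)).filter (fun x => ∀ i, x i ≤ d j)) :
    ∑ j ∈ Finset.range n, ((S' (j + 1)) \ (S j)).card ≤
      (m + 1) * ((∑ j ∈ Finset.range n, p j) + 1) ^ m := by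
  set P := ∑ j ∈ Finset.range n, p j with hPdef
  -- coordinates of elements of S j are bounded by d j
  have hSdj : ∀ j < n, ∀ x ∈ S j, ∀ i, x i ≤ d j := by
    intro j hj x hx i
    match j with
    | 0 =>
      rw [hS0, Finset.mem_singleton] at hx
      simp [hx]
    | k+1 =>
      have hk : k < n := by omega
      rw [hScap k hk, Finset.mem_filter] at hx
      exact le_trans (hx.2 i) (hd k (k+1) (by omega) hj)
  -- decomposition of elements of S' (j+1)
  have hdecomp : ∀ j < n, ∀ x ∈ S' (j+1),
      x ∈ S j ∨ ∃ y ∈ S j, ∃ i, x = y + Pi.single i (p j) := by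
    intro j hj x hx
    rw [hS' j hj, Finset.mem_add] at hx
    obtain ⟨y, hy, s, hs, hsx⟩ := hx
    rcases Finset.mem_insert.mp hs with h0 | him
    · left; rw [← hsx, h0, add_zero]; exact hy
    · right
      obtain ⟨i, -, hi⟩ := Finset.mem_image.mp him
      exact ⟨y, hy, i, by rw [← hsx, hi]⟩
  -- coordinates bounded by partial sums of p
  have hSle : ∀ j ≤ n, ∀ x ∈ S j, ∀ i, x i ≤ ∑ t ∈ Finset.range j, p t := by
    intro j
    induction j with
    | zero =>
      intro _ x hx i
      rw [hS0, Finset.mem_singleton] at hx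
      simp [hx]
    | succ j ih =>
      intro hj x hx i
      have hjn : j < n := by omega
      rw [hScap j hjn, Finset.mem_filter] at hx
      rcases hdecomp j hjn x hx.1 with h | ⟨y, hy, i', hyi⟩
      · have := ih (by omega) x h i
        rw [Finset.sum_range_succ]
        omega
      · have hyle := ih (by omega) y hy i
        have hx' : x i = y i + (Pi.single i' (p j) : Fin m → ℕ) i := by rw [hyi]; rfl
        have hsingle : (Pi.single i' (p j) : Fin m → ℕ) i ≤ p j := by
          rcases eq_or_ne i i' with h | h <;> simp [Pi.single_apply, h]
        rw [Finset.sum_range_succ]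
        omega
  have hsumle : ∀ j < n, (∑ t ∈ Finset.range j, p t) + p j ≤ P := by
    intro j hj
    rw [← Finset.sum_range_succ]
    exact Finset.sum_le_sum_of_subset (Finset.range_subset_range.mpr (by omega))
  have hsumle' : ∀ j ≤ n, (∑ t ∈ Finset.range j, p t) ≤ P :=
    fun j hj => Finset.sum_le_sum_of_subset (Finset.range_subset_range.mpr hj)
  -- coordinates of S' (j+1) bounded by P
  have hS'le : ∀ j < n, ∀ x ∈ S' (j+1), ∀ i, x i ≤ P := by
    intro j hj x hx i
    rcases hdecomp j hj x hx with h | ⟨y, hy, i', hyi⟩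
    · exact le_trans (hSle j (by omega) x h i) (hsumle' j (by omega))
    · have hyle := hSle j (by omega) y hy i
      have hx' : x i = y i + (Pi.single i' (p j) : Fin m → ℕ) i := by rw [hyi]; rfl
      have hsingle : (Pi.single i' (p j) : Fin m → ℕ) i ≤ p j := by
        rcases eq_or_ne i i' with h | h <;> simp [Pi.single_apply, h]
      have := hsumle j hj
      omega
  -- monotonicity
  have hmono : ∀ j < n, S j ⊆ S (j+1) := by
    intro j hj x hx
    rw [hScap j hj, Finset.mem_filter]
    refine ⟨?_, fun i => hSdj j hj x hx i⟩
    rw [hS' j hj, Finset.mem_add]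
    exact ⟨x, hx, 0, Finset.mem_insert_self _ _, add_zero x⟩
  -- bound on filtered elements
  have hfilt : ∀ j < n, ((S' (j+1)) \ S (j+1)).card ≤ m * (p j * (P+1)^(m-1)) := by
    intro j hj
    set B : Fin m → Finset (Fin m → ℕ) := fun i =>
      Fintype.piFinset (fun i' => if i' = i then Finset.Ioc (d j) (d j + p j)
        else Finset.range (P+1)) with hB
    have hsub : (S' (j+1)) \ S (j+1) ⊆ Finset.univ.biUnion B := by
      intro x hx
      obtain ⟨hx1, hx2⟩ := Finset.mem_sdiff.mp hx
      rw [hScap j hj] at hx2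
      have hviol : ∃ i, d j < x i := by
        by_contra h
        push_neg at h
        exact hx2 (Finset.mem_filter.mpr ⟨hx1, fun i => h i⟩)
      obtain ⟨i, hi⟩ := hviol
      have hxnS : x ∉ S j := fun hmem => absurd (hSdj j hj x hmem i) (by omega)
      rcases hdecomp j hj x hx1 with h | ⟨y, hy, i', hyi⟩
      · exact absurd h hxnS
      have hii' : i' = i := by
        by_contra hne
        have hxy : x i = y i := by
          rw [hyi]
          have h0 : (Pi.single i' (p j) : Fin m → ℕ) i = 0 := by
            rw [Pi.single_apply, if_neg (fun hc => hne hc.symm)]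
          show y i + (Pi.single i' (p j) : Fin m → ℕ) i = y i
          omega
        have := hSdj j hj y hy i
        omega
      rw [← hii'] at hi
      refine Finset.mem_biUnion.mpr ⟨i', Finset.mem_univ _, ?_⟩
      rw [hB, Fintype.mem_piFinset]
      intro i''
      by_cases h : i'' = i'
      · rw [if_pos h, Finset.mem_Ioc]
        have hx'' : x i'' = y i'' + p j := by
          rw [hyi]
          show y i'' + (Pi.single i' (p j) : Fin m → ℕ) i'' = _
          simp [Pi.single_apply, h]
        rw [← h] at hi
        have := hSdj j hj y hy i''
        omega
      · rw [if_neg h, Finset.mem_range]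
        have := hS'le j hj x hx1 i''
        omega
    have hcard : ∀ i : Fin m, (B i).card = p j * (P+1)^(m-1) := by
      intro i
      rw [hB, Fintype.card_piFinset,
        ← Finset.mul_prod_erase Finset.univ _ (Finset.mem_univ i), if_pos rfl,
        Nat.card_Ioc]
      congr 1
      · omega
      · calc ∏ i'' ∈ Finset.univ.erase i,
              (if i'' = i then Finset.Ioc (d j) (d j + p j)
                else Finset.range (P+1)).card
            = ∏ _i'' ∈ Finset.univ.erase i, (P+1) :=
              Finset.prod_congr rfl (fun i'' hi'' => by
                rw [if_neg (Finset.mem_erase.mp hi'').1, Finset.card_range])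
          _ = (P+1)^(m-1) := by
              rw [Finset.prod_const, Finset.card_erase_of_mem (Finset.mem_univ i),
                Finset.card_univ, Fintype.card_fin]
    calc ((S' (j+1)) \ S (j+1)).card ≤ (Finset.univ.biUnion B).card :=
          Finset.card_le_card hsub
      _ ≤ ∑ i, (B i).card := Finset.card_biUnion_le
      _ = m * (p j * (P+1)^(m-1)) := by
          rw [Finset.sum_congr rfl (fun i _ => hcard i), Finset.sum_const,
            Finset.card_univ, Fintype.card_fin, smul_eq_mul]
  -- telescoping
  have htel : ∀ k ≤ n, ∑ j ∈ Finset.range k, (S (j+1) \ S j).card ≤ (S k).card := by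
    intro k
    induction k with
    | zero => simp
    | succ k ih =>
      intro hk
      rw [Finset.sum_range_succ]
      have h1 := ih (by omega)
      have h2 : (S (k+1) \ S k).card + (S k).card = (S (k+1)).card :=
        Finset.card_sdiff_add_card_eq_card (hmono k hk)
      omega
  have hSn : (S n).card ≤ (P+1)^m := by
    have hsub : S n ⊆ Fintype.piFinset (fun _ : Fin m => Finset.range (P+1)) := by
      intro x hx
      rw [Fintype.mem_piFinset]
      intro i
      rw [Finset.mem_range]
      have := hSle n le_rfl x hx i
      have := hsumle' n le_rfl
      omega
    calc (S n).card ≤ _ := Finset.card_le_card hsub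
      _ = (P+1)^m := by
          rw [Fintype.card_piFinset]
          simp
  -- per-step bound
  have hstep : ∀ j ∈ Finset.range n,
      ((S' (j+1)) \ S j).card ≤ (S (j+1) \ S j).card + m * (p j * (P+1)^(m-1)) := by
    intro j hj'
    rw [Finset.mem_range] at hj'
    have hsplit : (S' (j+1)) \ S j ⊆ (S (j+1) \ S j) ∪ ((S' (j+1)) \ S (j+1)) := by
      intro x hx
      obtain ⟨h1, h2⟩ := Finset.mem_sdiff.mp hx
      rw [Finset.mem_union]
      by_cases h : x ∈ S (j+1)
      · exact Or.inl (Finset.mem_sdiff.mpr ⟨h, h2⟩)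
      · exact Or.inr (Finset.mem_sdiff.mpr ⟨h1, h⟩)
    calc ((S' (j+1)) \ S j).card ≤ _ := Finset.card_le_card hsplit
      _ ≤ (S (j+1) \ S j).card + ((S' (j+1)) \ S (j+1)).card := Finset.card_union_le _ _
      _ ≤ _ := by have := hfilt j hj'; omega
  have hpow : (P+1)^(m-1) * (P+1) = (P+1)^m := by
    rw [← pow_succ]
    congr 1
    omega
  have hsum2 : ∑ j ∈ Finset.range n, m * (p j * (P+1)^(m-1))
      = m * (P+1)^(m-1) * P := by
    rw [hPdef, Finset.mul_sum]
    exact Finset.sum_congr rfl (fun j _ => by ring)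
  have hmain : ∑ j ∈ Finset.range n, ((S' (j + 1)) \ (S j)).card
      ≤ (P+1)^m + m * (P+1)^(m-1) * P := by
    calc ∑ j ∈ Finset.range n, ((S' (j + 1)) \ (S j)).card
        ≤ ∑ j ∈ Finset.range n, ((S (j+1) \ S j).card + m * (p j * (P+1)^(m-1))) :=
          Finset.sum_le_sum hstep
      _ = (∑ j ∈ Finset.range n, (S (j+1) \ S j).card)
          + ∑ j ∈ Finset.range n, m * (p j * (P+1)^(m-1)) := Finset.sum_add_distrib
      _ ≤ (P+1)^m + m * (P+1)^(m-1) * P := by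
          have := htel n le_rfl
          rw [hsum2]
          have : ∑ j ∈ Finset.range n, (S (j+1) \ S j).card ≤ (P+1)^m :=
            le_trans (htel n le_rfl) hSn
          omega
  have hlast : m * (P+1)^(m-1) * P ≤ m * (P+1)^m := by
    calc m * (P+1)^(m-1) * P ≤ m * (P+1)^(m-1) * (P+1) :=
          Nat.mul_le_mul_left _ (by omega)
      _ = m * (P+1)^m := by rw [mul_assoc, hpow]
  have hfin : (m + 1) * (P+1)^m = (P+1)^m + m * (P+1)^m := by ring
  omega
end

section
/- Let m ≥ 1, p : Fin n → ℕ with p j > 0, d : Fin n → ℕ nondecreasing, and define S_0 = {0} ⊆ ℕ^m, S'_{j+1} = S_j + {0, p j·e_0, …, p j·e_{m−1}}, S_{j+1} = S'_{j+1} ∩ [0, d j]^m. If a vector x ∈ ℕ^m satisfies x ∈ S'_{j+1} \ S_j and all coordinates of x are at most d j, then x ∈ S_k for all k with j+1 ≤ k ≤ n. -/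
open Pointwise in
theorem stmt_14 (m n : ℕ) (hm : 1 ≤ m) (p d : ℕ → ℕ)
    (hp : ∀ j < n, 0 < p j)
    (hd : ∀ i j, i ≤ j → j < n → d i ≤ d j)
    (S S' : ℕ → Finset (Fin m → ℕ))
    (hS0 : S 0 = {0})
    (hS' : ∀ j < n, S' (j + 1) =
      S j + insert 0 ((Finset.univ : Finset (Fin m)).image (fun i => Pi.single i (p j))))
    (hScap : ∀ j < n, S (j + 1) = (S' (j + 1)).filter (fun x => ∀ i, x i ≤ d j)) :
    ∀ j < n, ∀ x : Fin m → ℕ, x ∈ S' (j + 1) → x ∉ S j → (∀ i, x i ≤ d j) →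
      ∀ k, j + 1 ≤ k → k ≤ n → x ∈ S k := by
  intro j hj x hx hnx hle
  refine Nat.le_induction ?_ ?_
  · intro _
    rw [hScap j hj, Finset.mem_filter]
    exact ⟨hx, hle⟩
  · intro k hk ih hkn
    have hkn' : k < n := hkn
    have hxk : x ∈ S k := ih (le_of_lt hkn')
    rw [hScap k hkn', Finset.mem_filter]
    constructor
    · rw [hS' k hkn']
      have := Finset.add_mem_add hxk
        (Finset.mem_insert_self 0 ((Finset.univ : Finset (Fin m)).image
          (fun i => Pi.single i (p k))))
      simpa using this
    · intro i
      exact le_trans (hle i) (hd j k (by omega) hkn')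
end

section
/- Let m ≥ 1, and let p : Fin n → ℕ with p j > 0 and d : Fin n → ℕ nondecreasing. Define S_0 = {0} ⊆ ℕ^m, S'_{j+1} = S_j + {0, p j·e_0, …, p j·e_{m−1}}, S_{j+1} = S'_{j+1} ∩ [0, d j]^m. Then for every vector s ∈ S_n there exists a partition of some subset J ⊆ {0,…,n−1} into classes J_0,…,J_{m−1} such that s_i = Σ_{k∈J_i} p k for each machine i, and for every i and every k ∈ J_i, the prefix sum Σ_{k'∈J_i, k'≤k} p k' is at most d k. -/
open Pointwise in
theorem aux_15 (m : ℕ) (p d : ℕ → ℕ) (S S' : ℕ → Finset (Fin m → ℕ))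
    (hS0 : S 0 = {0}) :
    ∀ n : ℕ,
    (∀ j < n, S' (j + 1) =
      S j + insert 0 ((Finset.univ : Finset (Fin m)).image (fun i => Pi.single i (p j)))) →
    (∀ j < n, S (j + 1) = (S' (j + 1)).filter (fun x => ∀ i, x i ≤ d j)) →
    ∀ s ∈ S n, ∃ J : Fin m → Finset ℕ,
      (∀ i, J i ⊆ Finset.range n) ∧
      (∀ i i', i ≠ i' → Disjoint (J i) (J i')) ∧
      (∀ i, s i = ∑ k ∈ J i, p k) ∧
      (∀ i, ∀ k ∈ J i, ∑ k' ∈ (J i).filter (· ≤ k), p k' ≤ d k) := by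
  intro n
  induction n with
  | zero =>
    intro _ _ s hs
    rw [hS0, Finset.mem_singleton] at hs
    subst hs
    exact ⟨fun _ => ∅, by simp, by simp, by simp, by simp⟩
  | succ n ih =>
    intro h1 h2 s hs
    rw [h2 n (Nat.lt_succ_self n), Finset.mem_filter,
      h1 n (Nat.lt_succ_self n), Finset.mem_add] at hs
    obtain ⟨⟨t, ht, v, hv, hstv⟩, hbound⟩ := hs
    obtain ⟨J, hsub, hdisj, hsum, hdd⟩ :=
      ih (fun j hj => h1 j (hj.trans (Nat.lt_succ_self n)))
         (fun j hj => h2 j (hj.trans (Nat.lt_succ_self n))) t ht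
    have hn : ∀ i, n ∉ J i := fun i h =>
      absurd (Finset.mem_range.mp (hsub i h)) (lt_irrefl n)
    rw [Finset.mem_insert] at hv
    rcases hv with rfl | hv
    · refine ⟨J, fun i => (hsub i).trans (Finset.range_subset_range.mpr (Nat.le_succ n)),
        hdisj, ?_, hdd⟩
      intro i
      rw [← hstv]
      simpa using hsum i
    · rw [Finset.mem_image] at hv
      obtain ⟨i₀, -, rfl⟩ := hv
      have hsval : ∀ i, s i = t i + (Pi.single i₀ (p n) : Fin m → ℕ) i := by
        intro i; rw [← hstv]; rfl
      refine ⟨fun i => if i = i₀ then insert n (J i₀) else J i, ?_, ?_, ?_, ?_⟩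
      · intro i
        by_cases hi : i = i₀ <;> simp only [hi, if_pos, if_neg, Finset.range_add_one]
        · exact Finset.insert_subset_insert _ (hsub i₀)
        · exact (hsub i).trans (Finset.subset_insert _ _)
      · intro i i' hii'
        by_cases hi : i = i₀ <;> by_cases hi' : i' = i₀ <;>
          simp only [hi, hi', if_pos, if_neg, hii']
        · exact absurd (hi.trans hi'.symm) hii'
        · rw [Finset.disjoint_insert_left]
          exact ⟨hn i', hdisj i₀ i' (hi ▸ hii')⟩
        · rw [Finset.disjoint_insert_right]
          exact ⟨hn i, hdisj i i₀ (hi' ▸ hii')⟩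
        · exact hdisj i i' hii'
      · intro i
        beta_reduce
        by_cases hi : i = i₀
        · subst hi
          rw [hsval i, Pi.single_eq_same, if_pos rfl, Finset.sum_insert (hn i),
            hsum i]
          ring
        · rw [hsval i, Pi.single_eq_of_ne hi, if_neg hi, hsum i, add_zero]
      · intro i k hk
        beta_reduce at hk ⊢
        by_cases hi : i = i₀
        · subst hi
          rw [if_pos rfl] at hk ⊢
          rcases Finset.mem_insert.mp hk with rfl | hk'
          · have hall : (insert k (J i)).filter (· ≤ k) = insert k (J i) := by
              apply Finset.filter_true_of_mem
              intro x hx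
              rcases Finset.mem_insert.mp hx with rfl | hx'
              · exact le_refl x
              · exact le_of_lt (Finset.mem_range.mp (hsub i hx'))
            rw [hall, Finset.sum_insert (hn i), ← hsum i]
            have := hbound i
            rw [hsval i, Pi.single_eq_same] at this
            omega
          · have hklt : k < n := Finset.mem_range.mp (hsub i hk')
            rw [Finset.filter_insert, if_neg (by omega : ¬ n ≤ k)]
            exact hdd i k hk'
        · rw [if_neg hi] at hk ⊢
          exact hdd i k hk

open Pointwise in
theorem stmt_15 (m n : ℕ) (hm : 1 ≤ m) (p d : ℕ → ℕ)
    (hp : ∀ j < n, 0 < p j)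
    (hd : ∀ i j, i ≤ j → j < n → d i ≤ d j)
    (S S' : ℕ → Finset (Fin m → ℕ))
    (hS0 : S 0 = {0})
    (hS' : ∀ j < n, S' (j + 1) =
      S j + insert 0 ((Finset.univ : Finset (Fin m)).image (fun i => Pi.single i (p j))))
    (hScap : ∀ j < n, S (j + 1) = (S' (j + 1)).filter (fun x => ∀ i, x i ≤ d j)) :
    ∀ s ∈ S n, ∃ J : Fin m → Finset ℕ,
      (∀ i, J i ⊆ Finset.range n) ∧
      (∀ i i', i ≠ i' → Disjoint (J i) (J i')) ∧
      (∀ i, s i = ∑ k ∈ J i, p k) ∧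
      (∀ i, ∀ k ∈ J i, ∑ k' ∈ (J i).filter (· ≤ k), p k' ≤ d k) :=
  aux_15 m p d S S' hS0 n hS' hScap
end

section
/- Let p : Fin n → ℕ with p j > 0 and d : Fin n → ℕ nondecreasing, and let S_j denote the Lawler–Moore sets (S_0 = {0}, S'_{j+1} = S_j + {0, p j}, S_{j+1} = S'_{j+1} ∩ [0, d j]). Define A(s) = min { j ∈ [n] : s ∈ S_{j+1} } for each s ∈ S_n with s > 0. Then for every s ∈ S_n with s > 0, letting j = A(s), we have s − p j ∈ S_j and s − p j ∈ S_n whenever s ≤ d j; in particular s − p j ≥ 0 and s − p j is again in S_{j}. -/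
open Pointwise in
theorem stmt_16 (n : ℕ) (p d : ℕ → ℕ)
    (hp : ∀ j < n, 0 < p j)
    (hd : ∀ i j, i ≤ j → j < n → d i ≤ d j)
    (S S' : ℕ → Finset ℕ)
    (hS0 : S 0 = {0})
    (hS' : ∀ j < n, S' (j + 1) = S j + ({0, p j} : Finset ℕ))
    (hScap : ∀ j < n, S (j + 1) = (S' (j + 1)).filter (· ≤ d j)) :
    ∀ s ∈ S n, 0 < s →
      ∀ j, j < n → s ∈ S (j + 1) → (∀ j' < j, s ∉ S (j' + 1)) →
        p j ≤ s ∧ s - p j ∈ S j ∧ (s ≤ d j → s - p j ∈ S n) := by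
  intro s hsn hspos j hjn hsj hmin
  rw [hScap j hjn, Finset.mem_filter] at hsj
  obtain ⟨hs', hsd⟩ := hsj
  rw [hS' j hjn, Finset.mem_add] at hs'
  obtain ⟨t, ht, e, he, hte⟩ := hs'
  simp only [Finset.mem_insert, Finset.mem_singleton] at he
  have hepj : e = p j := by
    rcases he with rfl | rfl
    · exfalso
      rw [add_zero] at hte
      subst hte
      rcases Nat.eq_zero_or_pos j with rfl | hj
      · rw [hS0, Finset.mem_singleton] at ht
        omega
      · exact hmin (j - 1) (by omega) (by rwa [Nat.sub_add_cancel hj])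
    · rfl
  subst hepj
  have hple : p j ≤ s := by omega
  have htval : t = s - p j := by omega
  subst htval
  refine ⟨hple, ht, fun hsd' => ?_⟩
  -- show s - p j ∈ S k for all j ≤ k ≤ n
  have key : ∀ k, j ≤ k → k ≤ n → s - p j ∈ S k := by
    intro k hk hkn
    induction k with
    | zero =>
        have : j = 0 := by omega
        subst this
        exact ht
    | succ m ih =>
        rcases Nat.lt_or_ge m j with hm | hm
        · have : j = m + 1 := by omega
          subst this
          exact ht
        · have hmn : m < n := by omega
          have hmem := ih hm (by omega)
          rw [hScap m hmn, Finset.mem_filter]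
          constructor
          · rw [hS' m hmn, Finset.mem_add]
            exact ⟨s - p j, hmem, 0, by simp, by simp⟩
          · have : s - p j ≤ d j := by omega
            calc s - p j ≤ d j := this
              _ ≤ d m := hd j m hm hmn
  exact key n (by omega) le_rfl
end
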